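/- Interval case of Theorem 3.3: if f_0(I) ∪ f_1(I) = I, then supp(Q) = I = [p_1, p_0]. -/

import Mathlib

open MeasureTheory

/-- `f_0(x) = ((1−ε)/ε)·(π_00 x + π_10)/(π_01 x + π_11)`. -/
noncomputable def f₀ (π00 π01 π10 π11 ε : ℝ) (x : ℝ) : ℝ :=
  ((1 - ε) / ε) * ((π00 * x + π10) / (π01 * x + π11))

/-- `f_1(x) = (ε/(1−ε))·(π_00 x + π_10)/(π_01 x + π_11)`. -/
noncomputable def f₁ (π00 π01 π10 π11 ε : ℝ) (x : ℝ) : ℝ :=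
  (ε / (1 - ε)) * ((π00 * x + π10) / (π01 * x + π11))

/-- `r_0(x) = (((1−ε)π_00 + επ_01)x + ((1−ε)π_10 + επ_11))/(x+1)`. -/
noncomputable def r₀ (π00 π01 π10 π11 ε : ℝ) (x : ℝ) : ℝ :=
  (((1 - ε) * π00 + ε * π01) * x + ((1 - ε) * π10 + ε * π11)) / (x + 1)

/-- `r_1(x) = ((επ_00 + (1−ε)π_01)x + (επ_10 + (1−ε)π_11))/(x+1)`. -/
noncomputable def r₁ (π00 π01 π10 π11 ε : ℝ) (x : ℝ) : ℝ :=
  ((ε * π00 + (1 - ε) * π01) * x + (ε * π10 + (1 - ε) * π11)) / (x + 1)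

/-- `f_b` for a binary symbol `b`. -/
noncomputable def fb (π00 π01 π10 π11 ε : ℝ) (b : Bool) : ℝ → ℝ :=
  if b then f₁ π00 π01 π10 π11 ε else f₀ π00 π01 π10 π11 ε

/-- The support of a measure on `ℝ`: the set of points all of whose open neighborhoods
have positive measure (the smallest closed set of full measure). -/
def measSupp (Q : Measure ℝ) : Set ℝ :=
  {x : ℝ | ∀ U : Set ℝ, IsOpen U → x ∈ U → 0 < Q U}

/-- Blackwell's invariance equation
`Q(E) = ∫_{f_0^{−1}(E)} r_0 dQ + ∫_{f_1^{−1}(E)} r_1 dQ` for Borel `E ⊆ (0,∞)`. -/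
def BlackwellInvariant (π00 π01 π10 π11 ε : ℝ) (Q : Measure ℝ) : Prop :=
  ∀ E : Set ℝ, MeasurableSet E → E ⊆ Set.Ioi (0 : ℝ) →
    Q E = (∫⁻ x in f₀ π00 π01 π10 π11 ε ⁻¹' E, ENNReal.ofReal (r₀ π00 π01 π10 π11 ε x) ∂Q)
      + ∫⁻ x in f₁ π00 π01 π10 π11 ε ⁻¹' E, ENNReal.ofReal (r₁ π00 π01 π10 π11 ε x) ∂Q


open Set

section Aux
variable {π00 π01 π10 π11 ε p₀ p₁ : ℝ}

lemma den_pos (h01 : 0 < π01) (h11 : 0 < π11) {x : ℝ} (hx : 0 ≤ x) : 0 < π01 * x + π11 := by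
  nlinarith

lemma num_pos (h00 : 0 < π00) (h10 : 0 < π10) {x : ℝ} (hx : 0 ≤ x) : 0 < π00 * x + π10 := by
  nlinarith

lemma gm_pos (h00 : 0 < π00) (h01 : 0 < π01) (h10 : 0 < π10) (h11 : 0 < π11)
    {x : ℝ} (hx : 0 ≤ x) : 0 < (π00 * x + π10) / (π01 * x + π11) :=
  div_pos (num_pos h00 h10 hx) (den_pos h01 h11 hx)

lemma gm_mono (h00 : 0 < π00) (h01 : 0 < π01) (h10 : 0 < π10) (h11 : 0 < π11)
    (hdet : 0 < π00 * π11 - π01 * π10) {x y : ℝ} (hx : 0 ≤ x) (hxy : x < y) :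
    (π00 * x + π10) / (π01 * x + π11) < (π00 * y + π10) / (π01 * y + π11) := by
  rw [div_lt_div_iff₀ (den_pos h01 h11 hx) (den_pos h01 h11 (le_trans hx hxy.le))]
  nlinarith [mul_pos hdet (sub_pos.mpr hxy)]

lemma gm_ub (h00 : 0 < π00) (h01 : 0 < π01) (h10 : 0 < π10) (h11 : 0 < π11)
    (hdet : 0 < π00 * π11 - π01 * π10) {x : ℝ} (hx : 0 ≤ x) :
    (π00 * x + π10) / (π01 * x + π11) < π00 / π01 := by
  rw [div_lt_div_iff₀ (den_pos h01 h11 hx) h01]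
  nlinarith

lemma gm_lb (h00 : 0 < π00) (h01 : 0 < π01) (h10 : 0 < π10) (h11 : 0 < π11)
    (hdet : 0 < π00 * π11 - π01 * π10) {x : ℝ} (hx : 0 < x) :
    π10 / π11 < (π00 * x + π10) / (π01 * x + π11) := by
  have := gm_mono h00 h01 h10 h11 hdet (le_refl 0) hx
  simpa using this

lemma eps_pos' (hε0 : 0 < ε) (hε : ε < 1/2) : 0 < 1 - ε := by linarith

lemma c0_pos (hε0 : 0 < ε) (hε : ε < 1/2) : 0 < (1 - ε) / ε := div_pos (by linarith) hε0
lemma c1_pos (hε0 : 0 < ε) (hε : ε < 1/2) : 0 < ε / (1 - ε) := div_pos hε0 (by linarith)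
lemma c1_lt_c0 (hε0 : 0 < ε) (hε : ε < 1/2) : ε / (1 - ε) < (1 - ε) / ε := by
  rw [div_lt_div_iff₀ (by linarith) hε0]; nlinarith

lemma f0_pos (h00 : 0 < π00) (h01 : 0 < π01) (h10 : 0 < π10) (h11 : 0 < π11)
    (hε0 : 0 < ε) (hε : ε < 1/2) {x : ℝ} (hx : 0 ≤ x) : 0 < f₀ π00 π01 π10 π11 ε x :=
  mul_pos (c0_pos hε0 hε) (gm_pos h00 h01 h10 h11 hx)

lemma f1_pos (h00 : 0 < π00) (h01 : 0 < π01) (h10 : 0 < π10) (h11 : 0 < π11)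
    (hε0 : 0 < ε) (hε : ε < 1/2) {x : ℝ} (hx : 0 ≤ x) : 0 < f₁ π00 π01 π10 π11 ε x :=
  mul_pos (c1_pos hε0 hε) (gm_pos h00 h01 h10 h11 hx)

lemma f0_mono (h00 : 0 < π00) (h01 : 0 < π01) (h10 : 0 < π10) (h11 : 0 < π11)
    (hdet : 0 < π00 * π11 - π01 * π10) (hε0 : 0 < ε) (hε : ε < 1/2)
    {x y : ℝ} (hx : 0 ≤ x) (hxy : x < y) : f₀ π00 π01 π10 π11 ε x < f₀ π00 π01 π10 π11 ε y :=
  mul_lt_mul_of_pos_left (gm_mono h00 h01 h10 h11 hdet hx hxy) (c0_pos hε0 hε)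

lemma f1_mono (h00 : 0 < π00) (h01 : 0 < π01) (h10 : 0 < π10) (h11 : 0 < π11)
    (hdet : 0 < π00 * π11 - π01 * π10) (hε0 : 0 < ε) (hε : ε < 1/2)
    {x y : ℝ} (hx : 0 ≤ x) (hxy : x < y) : f₁ π00 π01 π10 π11 ε x < f₁ π00 π01 π10 π11 ε y :=
  mul_lt_mul_of_pos_left (gm_mono h00 h01 h10 h11 hdet hx hxy) (c1_pos hε0 hε)

lemma f0_mono' (h00 : 0 < π00) (h01 : 0 < π01) (h10 : 0 < π10) (h11 : 0 < π11)
    (hdet : 0 < π00 * π11 - π01 * π10) (hε0 : 0 < ε) (hε : ε < 1/2)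
    {x y : ℝ} (hx : 0 ≤ x) (hxy : x ≤ y) : f₀ π00 π01 π10 π11 ε x ≤ f₀ π00 π01 π10 π11 ε y := by
  rcases eq_or_lt_of_le hxy with h | h
  · rw [h]
  · exact (f0_mono h00 h01 h10 h11 hdet hε0 hε hx h).le

lemma f1_mono' (h00 : 0 < π00) (h01 : 0 < π01) (h10 : 0 < π10) (h11 : 0 < π11)
    (hdet : 0 < π00 * π11 - π01 * π10) (hε0 : 0 < ε) (hε : ε < 1/2)
    {x y : ℝ} (hx : 0 ≤ x) (hxy : x ≤ y) : f₁ π00 π01 π10 π11 ε x ≤ f₁ π00 π01 π10 π11 ε y := by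
  rcases eq_or_lt_of_le hxy with h | h
  · rw [h]
  · exact (f1_mono h00 h01 h10 h11 hdet hε0 hε hx h).le

lemma f1_lt_f0 (h00 : 0 < π00) (h01 : 0 < π01) (h10 : 0 < π10) (h11 : 0 < π11)
    (hε0 : 0 < ε) (hε : ε < 1/2) {x : ℝ} (hx : 0 ≤ x) :
    f₁ π00 π01 π10 π11 ε x < f₀ π00 π01 π10 π11 ε x :=
  mul_lt_mul_of_pos_right (c1_lt_c0 hε0 hε) (gm_pos h00 h01 h10 h11 hx)

lemma f0_ub (h00 : 0 < π00) (h01 : 0 < π01) (h10 : 0 < π10) (h11 : 0 < π11)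
    (hdet : 0 < π00 * π11 - π01 * π10) (hε0 : 0 < ε) (hε : ε < 1/2) {x : ℝ} (hx : 0 ≤ x) :
    f₀ π00 π01 π10 π11 ε x < ((1 - ε) / ε) * (π00 / π01) :=
  mul_lt_mul_of_pos_left (gm_ub h00 h01 h10 h11 hdet hx) (c0_pos hε0 hε)

lemma f1_ub (h00 : 0 < π00) (h01 : 0 < π01) (h10 : 0 < π10) (h11 : 0 < π11)
    (hdet : 0 < π00 * π11 - π01 * π10) (hε0 : 0 < ε) (hε : ε < 1/2) {x : ℝ} (hx : 0 ≤ x) :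
    f₁ π00 π01 π10 π11 ε x < (ε / (1 - ε)) * (π00 / π01) :=
  mul_lt_mul_of_pos_left (gm_ub h00 h01 h10 h11 hdet hx) (c1_pos hε0 hε)

lemma f1_lb (h00 : 0 < π00) (h01 : 0 < π01) (h10 : 0 < π10) (h11 : 0 < π11)
    (hdet : 0 < π00 * π11 - π01 * π10) (hε0 : 0 < ε) (hε : ε < 1/2) {x : ℝ} (hx : 0 < x) :
    (ε / (1 - ε)) * (π10 / π11) < f₁ π00 π01 π10 π11 ε x :=
  mul_lt_mul_of_pos_left (gm_lb h00 h01 h10 h11 hdet hx) (c1_pos hε0 hε)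

lemma f0_contOn (h01 : 0 < π01) (h11 : 0 < π11) :
    ContinuousOn (f₀ π00 π01 π10 π11 ε) (Ici 0) := by
  apply ContinuousOn.mul continuousOn_const
  exact ContinuousOn.div (by fun_prop) (by fun_prop) (fun x hx => (den_pos h01 h11 hx).ne')

lemma f1_contOn (h01 : 0 < π01) (h11 : 0 < π11) :
    ContinuousOn (f₁ π00 π01 π10 π11 ε) (Ici 0) := by
  apply ContinuousOn.mul continuousOn_const
  exact ContinuousOn.div (by fun_prop) (by fun_prop) (fun x hx => (den_pos h01 h11 hx).ne')

/-- Above the fixed point, `f₀` is below the diagonal. -/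
lemma f0_below (h00 : 0 < π00) (h01 : 0 < π01) (h10 : 0 < π10) (h11 : 0 < π11)
    (hdet : 0 < π00 * π11 - π01 * π10) (hε0 : 0 < ε) (hε : ε < 1/2)
    (hp₀ : 0 < p₀) (huniq₀ : ∀ q : ℝ, 0 < q → f₀ π00 π01 π10 π11 ε q = q → q = p₀)
    {u : ℝ} (hu : p₀ < u) : f₀ π00 π01 π10 π11 ε u < u := by
  by_contra hcon
  push_neg at hcon
  set L : ℝ := ((1 - ε) / ε) * (π00 / π01) with hL
  set B : ℝ := max u L with hB
  have hu0 : 0 < u := hp₀.trans hu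
  have huB : u ≤ B := le_max_left _ _
  have hcont : ContinuousOn (fun x => f₀ π00 π01 π10 π11 ε x - x) (Icc u B) :=
    ((f0_contOn h01 h11).mono (fun x hx => le_trans hu0.le hx.1)).sub continuousOn_id
  have hB0 : f₀ π00 π01 π10 π11 ε B - B < 0 := by
    have := f0_ub h00 h01 h10 h11 hdet hε0 hε (x := B) (le_trans hu0.le huB)
    have : f₀ π00 π01 π10 π11 ε B < B := lt_of_lt_of_le this (le_max_right _ _)
    linarith
  have h0mem : (0:ℝ) ∈ Icc (f₀ π00 π01 π10 π11 ε B - B) (f₀ π00 π01 π10 π11 ε u - u) :=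
    ⟨hB0.le, by linarith⟩
  obtain ⟨w, hwmem, hw⟩ := intermediate_value_Icc' huB hcont h0mem
  have hwfix : f₀ π00 π01 π10 π11 ε w = w := by simpa [sub_eq_zero] using hw
  have : w = p₀ := huniq₀ w (lt_of_lt_of_le hu0 hwmem.1) hwfix
  linarith [hwmem.1, hu]

/-- Below the fixed point, `f₁` is above the diagonal. -/
lemma f1_above (h00 : 0 < π00) (h01 : 0 < π01) (h10 : 0 < π10) (h11 : 0 < π11)
    (hdet : 0 < π00 * π11 - π01 * π10) (hε0 : 0 < ε) (hε : ε < 1/2)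
    (hp₁ : 0 < p₁) (huniq₁ : ∀ q : ℝ, 0 < q → f₁ π00 π01 π10 π11 ε q = q → q = p₁)
    {u : ℝ} (hu0 : 0 < u) (hu : u < p₁) : u < f₁ π00 π01 π10 π11 ε u := by
  by_contra hcon
  push_neg at hcon
  set m : ℝ := (ε / (1 - ε)) * (π10 / π11) with hm
  have hmpos : 0 < m := mul_pos (c1_pos hε0 hε) (div_pos h10 h11)
  set a : ℝ := min u m / 2 with ha
  have ha0 : 0 < a := by positivity
  have ham : a < m := by
    have : min u m ≤ m := min_le_right _ _
    have : a ≤ m / 2 := by rw [ha]; linarith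
    linarith
  have hau : a ≤ u := by
    have : min u m ≤ u := min_le_left _ _
    rw [ha]; linarith
  have hfa : a < f₁ π00 π01 π10 π11 ε a := lt_trans ham (f1_lb h00 h01 h10 h11 hdet hε0 hε ha0)
  have hcont : ContinuousOn (fun x => f₁ π00 π01 π10 π11 ε x - x) (Icc a u) :=
    ((f1_contOn h01 h11).mono (fun x hx => le_trans ha0.le hx.1)).sub continuousOn_id
  have h0mem : (0:ℝ) ∈ Icc (f₁ π00 π01 π10 π11 ε u - u) (f₁ π00 π01 π10 π11 ε a - a) :=
    ⟨by linarith, by linarith⟩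
  obtain ⟨w, hwmem, hw⟩ := intermediate_value_Icc' hau hcont h0mem
  have hwfix : f₁ π00 π01 π10 π11 ε w = w := by simpa [sub_eq_zero] using hw
  have : w = p₁ := huniq₁ w (lt_of_lt_of_le ha0 hwmem.1) hwfix
  linarith [hwmem.2]

lemma p1_lt_p0 (h00 : 0 < π00) (h01 : 0 < π01) (h10 : 0 < π10) (h11 : 0 < π11)
    (hdet : 0 < π00 * π11 - π01 * π10) (hε0 : 0 < ε) (hε : ε < 1/2)
    (hp₀ : 0 < p₀) (hp₁ : 0 < p₁)
    (hfix₀ : f₀ π00 π01 π10 π11 ε p₀ = p₀) (hfix₁ : f₁ π00 π01 π10 π11 ε p₁ = p₁)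
    (huniq₁ : ∀ q : ℝ, 0 < q → f₁ π00 π01 π10 π11 ε q = q → q = p₁) : p₁ < p₀ := by
  have hlt : f₁ π00 π01 π10 π11 ε p₀ < p₀ := by
    have := f1_lt_f0 h00 h01 h10 h11 hε0 hε (x := p₀) hp₀.le
    rw [hfix₀] at this; exact this
  by_contra hcon
  push_neg at hcon
  rcases eq_or_lt_of_le hcon with h | h
  · rw [← h] at hfix₁; linarith [hfix₁]
  · exact absurd (f1_above h00 h01 h10 h11 hdet hε0 hε hp₁ huniq₁ hp₀ h) (by linarith)

end Aux

section Aux2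
variable {π00 π01 π10 π11 ε p₀ p₁ : ℝ} {Q : Measure ℝ}

lemma r_sum (hrow0 : π00 + π01 = 1) (hrow1 : π10 + π11 = 1) {x : ℝ} (hx : 0 ≤ x) :
    r₀ π00 π01 π10 π11 ε x + r₁ π00 π01 π10 π11 ε x = 1 := by
  unfold r₀ r₁
  rw [← add_div, div_eq_one_iff_eq (by linarith : x + 1 ≠ 0)]
  linear_combination x * hrow0 + hrow1

lemma r0_ge (h00 : 0 < π00) (h01 : 0 < π01) (h10 : 0 < π10) (h11 : 0 < π11)
    (hε0 : 0 < ε) (hε : ε < 1/2) {x : ℝ} (hx : 0 ≤ x) :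
    ε * min (min π00 π01) (min π10 π11) ≤ r₀ π00 π01 π10 π11 ε x := by
  set c := ε * min (min π00 π01) (min π10 π11) with hc
  have m1 : c ≤ ε * π00 := by
    apply mul_le_mul_of_nonneg_left _ hε0.le
    exact le_trans (min_le_left _ _) (min_le_left _ _)
  have m3 : c ≤ ε * π10 := by
    apply mul_le_mul_of_nonneg_left _ hε0.le
    exact le_trans (min_le_right _ _) (min_le_left _ _)
  unfold r₀
  rw [le_div_iff₀ (by linarith : (0:ℝ) < x + 1)]
  have hα : c ≤ (1-ε)*π00 + ε*π01 := by nlinarith [mul_pos hε0 h01]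
  have hβ : c ≤ (1-ε)*π10 + ε*π11 := by nlinarith [mul_pos hε0 h11]
  nlinarith [mul_le_mul_of_nonneg_right hα hx]

lemma r1_ge (h00 : 0 < π00) (h01 : 0 < π01) (h10 : 0 < π10) (h11 : 0 < π11)
    (hε0 : 0 < ε) (hε : ε < 1/2) {x : ℝ} (hx : 0 ≤ x) :
    ε * min (min π00 π01) (min π10 π11) ≤ r₁ π00 π01 π10 π11 ε x := by
  set c := ε * min (min π00 π01) (min π10 π11) with hc
  have m2 : c ≤ ε * π01 := by
    apply mul_le_mul_of_nonneg_left _ hε0.le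
    exact le_trans (min_le_left _ _) (min_le_right _ _)
  have m4 : c ≤ ε * π11 := by
    apply mul_le_mul_of_nonneg_left _ hε0.le
    exact le_trans (min_le_right _ _) (min_le_right _ _)
  unfold r₁
  rw [le_div_iff₀ (by linarith : (0:ℝ) < x + 1)]
  have hα : c ≤ ε*π00 + (1-ε)*π01 := by nlinarith [mul_pos hε0 h00]
  have hβ : c ≤ ε*π10 + (1-ε)*π11 := by nlinarith [mul_pos hε0 h10]
  nlinarith [mul_le_mul_of_nonneg_right hα hx]

lemma cmin_pos (h00 : 0 < π00) (h01 : 0 < π01) (h10 : 0 < π10) (h11 : 0 < π11)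
    (hε0 : 0 < ε) : 0 < ε * min (min π00 π01) (min π10 π11) :=
  mul_pos hε0 (lt_min (lt_min h00 h01) (lt_min h10 h11))

lemma r0_nonneg (h00 : 0 < π00) (h01 : 0 < π01) (h10 : 0 < π10) (h11 : 0 < π11)
    (hε0 : 0 < ε) (hε : ε < 1/2) {x : ℝ} (hx : 0 ≤ x) : 0 ≤ r₀ π00 π01 π10 π11 ε x :=
  le_trans (cmin_pos h00 h01 h10 h11 hε0).le (r0_ge h00 h01 h10 h11 hε0 hε hx)

lemma r1_nonneg (h00 : 0 < π00) (h01 : 0 < π01) (h10 : 0 < π10) (h11 : 0 < π11)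
    (hε0 : 0 < ε) (hε : ε < 1/2) {x : ℝ} (hx : 0 ≤ x) : 0 ≤ r₁ π00 π01 π10 π11 ε x :=
  le_trans (cmin_pos h00 h01 h10 h11 hε0).le (r1_ge h00 h01 h10 h11 hε0 hε hx)

lemma mr0 : Measurable fun x => ENNReal.ofReal (r₀ π00 π01 π10 π11 ε x) := by
  apply Measurable.ennreal_ofReal; unfold r₀; fun_prop

lemma mr1 : Measurable fun x => ENNReal.ofReal (r₁ π00 π01 π10 π11 ε x) := by
  apply Measurable.ennreal_ofReal; unfold r₁; fun_prop

lemma QIic0 [IsProbabilityMeasure Q] (hQpos : Q (Set.Ioi 0) = 1) : Q (Set.Iic 0) = 0 := by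
  have h := measure_compl (measurableSet_Ioi (a := (0:ℝ))) (measure_ne_top Q _)
  rw [Set.compl_Ioi, hQpos, measure_univ] at h
  simpa using h

lemma term0_le (hQinv : BlackwellInvariant π00 π01 π10 π11 ε Q) {E : Set ℝ}
    (hE : MeasurableSet E) (hE0 : E ⊆ Set.Ioi 0) :
    (∫⁻ x in f₀ π00 π01 π10 π11 ε ⁻¹' E, ENNReal.ofReal (r₀ π00 π01 π10 π11 ε x) ∂Q) ≤ Q E := by
  rw [hQinv E hE hE0]; exact le_self_add

lemma term1_le (hQinv : BlackwellInvariant π00 π01 π10 π11 ε Q) {E : Set ℝ}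
    (hE : MeasurableSet E) (hE0 : E ⊆ Set.Ioi 0) :
    (∫⁻ x in f₁ π00 π01 π10 π11 ε ⁻¹' E, ENNReal.ofReal (r₁ π00 π01 π10 π11 ε x) ∂Q) ≤ Q E := by
  rw [hQinv E hE hE0]; exact le_add_self

lemma step_le (h00 : 0 < π00) (h01 : 0 < π01) (h10 : 0 < π10) (h11 : 0 < π11)
    (hrow0 : π00 + π01 = 1) (hrow1 : π10 + π11 = 1) (hε0 : 0 < ε) (hε : ε < 1/2)
    [IsProbabilityMeasure Q] (hQpos : Q (Set.Ioi 0) = 1)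
    (hQinv : BlackwellInvariant π00 π01 π10 π11 ε Q) {E B : Set ℝ}
    (hE : MeasurableSet E) (hE0 : E ⊆ Set.Ioi 0) (hB : MeasurableSet B) (hB0 : B ⊆ Set.Ioi 0)
    (h0 : f₀ π00 π01 π10 π11 ε ⁻¹' E ∩ Set.Ioi 0 ⊆ B)
    (h1 : f₁ π00 π01 π10 π11 ε ⁻¹' E ∩ Set.Ioi 0 ⊆ B) : Q E ≤ Q B := by
  have hIic : Q.restrict (Set.Iic 0) = 0 := Measure.restrict_eq_zero.mpr (QIic0 hQpos)
  have chain : ∀ (f : ℝ → ℝ) (r : ℝ → ℝ), (f ⁻¹' E ∩ Set.Ioi 0 ⊆ B) →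
      (∫⁻ x in f ⁻¹' E, ENNReal.ofReal (r x) ∂Q) ≤ ∫⁻ x in B, ENNReal.ofReal (r x) ∂Q := by
    intro f r hsub
    calc (∫⁻ x in f ⁻¹' E, ENNReal.ofReal (r x) ∂Q)
        ≤ ∫⁻ x in (f ⁻¹' E ∩ Set.Ioi 0) ∪ Set.Iic 0, ENNReal.ofReal (r x) ∂Q := by
          apply lintegral_mono_set
          intro x hx
          rcases le_or_gt x 0 with h | h
          · exact Or.inr h
          · exact Or.inl ⟨hx, h⟩
      _ ≤ (∫⁻ x in f ⁻¹' E ∩ Set.Ioi 0, ENNReal.ofReal (r x) ∂Q)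
            + ∫⁻ x in Set.Iic 0, ENNReal.ofReal (r x) ∂Q := lintegral_union_le _ _ _
      _ = ∫⁻ x in f ⁻¹' E ∩ Set.Ioi 0, ENNReal.ofReal (r x) ∂Q := by
          rw [hIic, lintegral_zero_measure, add_zero]
      _ ≤ ∫⁻ x in B, ENNReal.ofReal (r x) ∂Q := lintegral_mono_set hsub
  calc Q E = (∫⁻ x in f₀ π00 π01 π10 π11 ε ⁻¹' E, ENNReal.ofReal (r₀ π00 π01 π10 π11 ε x) ∂Q)
        + ∫⁻ x in f₁ π00 π01 π10 π11 ε ⁻¹' E, ENNReal.ofReal (r₁ π00 π01 π10 π11 ε x) ∂Q :=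
        hQinv E hE hE0
    _ ≤ (∫⁻ x in B, ENNReal.ofReal (r₀ π00 π01 π10 π11 ε x) ∂Q)
        + ∫⁻ x in B, ENNReal.ofReal (r₁ π00 π01 π10 π11 ε x) ∂Q :=
        add_le_add (chain _ _ h0) (chain _ _ h1)
    _ = ∫⁻ x in B, (ENNReal.ofReal (r₀ π00 π01 π10 π11 ε x)
          + ENNReal.ofReal (r₁ π00 π01 π10 π11 ε x)) ∂Q := (lintegral_add_left mr0 _).symm
    _ = ∫⁻ x in B, (1:ENNReal) ∂Q := by
        apply setLIntegral_congr_fun hB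
        intro x hx
        have hx0 : (0:ℝ) < x := hB0 hx
        beta_reduce
        rw [← ENNReal.ofReal_add (r0_nonneg h00 h01 h10 h11 hε0 hε hx0.le)
          (r1_nonneg h00 h01 h10 h11 hε0 hε hx0.le), r_sum hrow0 hrow1 hx0.le,
          ENNReal.ofReal_one]
    _ = Q B := setLIntegral_one _

lemma step_ge₀ (hQinv : BlackwellInvariant π00 π01 π10 π11 ε Q) {E J : Set ℝ} {c : ℝ}
    (hE : MeasurableSet E) (hE0 : E ⊆ Set.Ioi 0)
    (hJsub : J ⊆ f₀ π00 π01 π10 π11 ε ⁻¹' E)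
    (hc : ∀ x ∈ J, c ≤ r₀ π00 π01 π10 π11 ε x) : ENNReal.ofReal c * Q J ≤ Q E :=
  calc ENNReal.ofReal c * Q J = ∫⁻ _ in J, ENNReal.ofReal c ∂Q := (setLIntegral_const _ _).symm
    _ ≤ ∫⁻ x in J, ENNReal.ofReal (r₀ π00 π01 π10 π11 ε x) ∂Q :=
        setLIntegral_mono mr0 (fun x hx => ENNReal.ofReal_le_ofReal (hc x hx))
    _ ≤ ∫⁻ x in f₀ π00 π01 π10 π11 ε ⁻¹' E, ENNReal.ofReal (r₀ π00 π01 π10 π11 ε x) ∂Q :=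
        lintegral_mono_set hJsub
    _ ≤ Q E := term0_le hQinv hE hE0

lemma step_ge₁ (hQinv : BlackwellInvariant π00 π01 π10 π11 ε Q) {E J : Set ℝ} {c : ℝ}
    (hE : MeasurableSet E) (hE0 : E ⊆ Set.Ioi 0)
    (hJsub : J ⊆ f₁ π00 π01 π10 π11 ε ⁻¹' E)
    (hc : ∀ x ∈ J, c ≤ r₁ π00 π01 π10 π11 ε x) : ENNReal.ofReal c * Q J ≤ Q E :=
  calc ENNReal.ofReal c * Q J = ∫⁻ _ in J, ENNReal.ofReal c ∂Q := (setLIntegral_const _ _).symm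
    _ ≤ ∫⁻ x in J, ENNReal.ofReal (r₁ π00 π01 π10 π11 ε x) ∂Q :=
        setLIntegral_mono mr1 (fun x hx => ENNReal.ofReal_le_ofReal (hc x hx))
    _ ≤ ∫⁻ x in f₁ π00 π01 π10 π11 ε ⁻¹' E, ENNReal.ofReal (r₁ π00 π01 π10 π11 ε x) ∂Q :=
        lintegral_mono_set hJsub
    _ ≤ Q E := term1_le hQinv hE hE0

lemma moebius_surj (h00 : 0 < π00) (h01 : 0 < π01) (h10 : 0 < π10) (h11 : 0 < π11)
    {c s : ℝ} (hc : 0 < c) (hs1 : c * (π10 / π11) < s) (hs2 : s < c * (π00 / π01)) :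
    ∃ u : ℝ, 0 < u ∧ c * ((π00 * u + π10) / (π01 * u + π11)) = s := by
  have hden2 : 0 < c * π00 - π01 * s := by
    rw [mul_div_assoc'] at hs2
    rw [lt_div_iff₀ h01] at hs2
    linarith
  have hnum2 : 0 < π11 * s - c * π10 := by
    rw [mul_div_assoc'] at hs1
    rw [div_lt_iff₀ h11] at hs1
    linarith
  refine ⟨(π11 * s - c * π10) / (c * π00 - π01 * s), div_pos hnum2 hden2, ?_⟩
  have hu0 : 0 < (π11 * s - c * π10) / (c * π00 - π01 * s) := div_pos hnum2 hden2
  have hden : 0 < π01 * ((π11 * s - c * π10) / (c * π00 - π01 * s)) + π11 :=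
    den_pos h01 h11 hu0.le
  rw [mul_div_assoc', div_eq_iff hden.ne']
  field_simp [show c * π00 - s * π01 ≠ 0 by rw [mul_comm s]; exact hden2.ne']
  ring
end Aux2

section Aux3
variable {π00 π01 π10 π11 ε p₀ p₁ : ℝ} {Q : Measure ℝ}

lemma f0_zero : f₀ π00 π01 π10 π11 ε 0 = ((1-ε)/ε) * (π10/π11) := by
  unfold f₀; norm_num

lemma f1_zero : f₁ π00 π01 π10 π11 ε 0 = (ε/(1-ε)) * (π10/π11) := by
  unfold f₁; norm_num

lemma Q_Ioi_zero (h00 : 0 < π00) (h01 : 0 < π01) (h10 : 0 < π10) (h11 : 0 < π11)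
    (hrow0 : π00 + π01 = 1) (hrow1 : π10 + π11 = 1)
    (hdet : 0 < π00 * π11 - π01 * π10) (hε0 : 0 < ε) (hε : ε < 1/2)
    (hp₀ : 0 < p₀) (hfix₀ : f₀ π00 π01 π10 π11 ε p₀ = p₀)
    (huniq₀ : ∀ q : ℝ, 0 < q → f₀ π00 π01 π10 π11 ε q = q → q = p₀)
    [IsProbabilityMeasure Q] (hQpos : Q (Set.Ioi 0) = 1)
    (hQinv : BlackwellInvariant π00 π01 π10 π11 ε Q) :
    ∀ t, p₀ < t → Q (Set.Ioi t) = 0 := by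
  have hLpos : 0 < ((1-ε)/ε) * (π00/π01) := mul_pos (c0_pos hε0 hε) (div_pos h00 h01)
  -- base case : t ≥ L
  have base : ∀ t, ((1-ε)/ε) * (π00/π01) ≤ t → Q (Set.Ioi t) = 0 := by
    intro t ht
    have ht0 : (0:ℝ) < t := lt_of_lt_of_le hLpos ht
    have hle : Q (Set.Ioi t) ≤ Q (∅ : Set ℝ) := by
      apply step_le h00 h01 h10 h11 hrow0 hrow1 hε0 hε hQpos hQinv measurableSet_Ioi
        (fun x hx => lt_trans ht0 hx) MeasurableSet.empty (by simp)
      · rintro x ⟨hx1, hx2⟩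
        exact absurd (lt_of_le_of_lt ht hx1)
          (not_lt.mpr (f0_ub h00 h01 h10 h11 hdet hε0 hε (le_of_lt hx2)).le)
      · rintro x ⟨hx1, hx2⟩
        have : f₁ π00 π01 π10 π11 ε x < f₀ π00 π01 π10 π11 ε x :=
          f1_lt_f0 h00 h01 h10 h11 hε0 hε (le_of_lt hx2)
        exact absurd (lt_of_le_of_lt ht (lt_trans hx1 this))
          (not_lt.mpr (f0_ub h00 h01 h10 h11 hdet hε0 hε (le_of_lt hx2)).le)
    simpa using hle
  intro t ht
  rcases le_or_gt (((1-ε)/ε) * (π00/π01)) t with htL | htL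
  · exact base t htL
  -- min of (u - f₀ u) on [t, L]
  set L : ℝ := ((1-ε)/ε) * (π00/π01) with hLdef
  have ht0 : (0:ℝ) < t := hp₀.trans ht
  have hcont : ContinuousOn (fun u => u - f₀ π00 π01 π10 π11 ε u) (Set.Icc t L) :=
    continuousOn_id.sub ((f0_contOn h01 h11).mono (fun x hx => le_trans ht0.le hx.1))
  obtain ⟨z, hzmem, hzmin⟩ := isCompact_Icc.exists_isMinOn ⟨t, le_refl t, htL.le⟩ hcont
  set δ : ℝ := z - f₀ π00 π01 π10 π11 ε z with hδdef
  have hδ : 0 < δ :=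
    sub_pos.mpr (f0_below h00 h01 h10 h11 hdet hε0 hε hp₀ huniq₀ (lt_of_lt_of_le ht hzmem.1))
  have key : ∀ n : ℕ, ∀ s, t ≤ s → s < L → L - s ≤ n * δ → Q (Set.Ioi s) = 0 := by
    intro n
    induction n with
    | zero => intro s hs1 hs2 hs3; exfalso; push_cast at hs3; linarith
    | succ n ih =>
      intro s hs1 hs2 hs3
      have hsp₀ : p₀ < s := lt_of_lt_of_le ht hs1
      have hs0 : (0:ℝ) < s := hp₀.trans hsp₀
      have hs_lb : ((1-ε)/ε) * (π10/π11) < s := by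
        have h1 : f₀ π00 π01 π10 π11 ε 0 < f₀ π00 π01 π10 π11 ε p₀ :=
          f0_mono h00 h01 h10 h11 hdet hε0 hε le_rfl hp₀
        rw [f0_zero, hfix₀] at h1
        linarith
      obtain ⟨u, hu0, huf⟩ := moebius_surj h00 h01 h10 h11 (c0_pos hε0 hε) hs_lb hs2
      have huf' : f₀ π00 π01 π10 π11 ε u = s := huf
      have hup₀ : p₀ < u := by
        by_contra hcon
        push_neg at hcon
        have := f0_mono' h00 h01 h10 h11 hdet hε0 hε hu0.le hcon
        rw [huf', hfix₀] at this
        linarith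
      have hsu : s < u := by
        have := f0_below h00 h01 h10 h11 hdet hε0 hε hp₀ huniq₀ hup₀
        rw [huf'] at this; exact this
      have hQle : Q (Set.Ioi s) ≤ Q (Set.Ioi u) := by
        apply step_le h00 h01 h10 h11 hrow0 hrow1 hε0 hε hQpos hQinv measurableSet_Ioi
          (fun x hx => lt_trans hs0 hx) measurableSet_Ioi (fun x hx => lt_trans hu0 hx)
        · rintro x ⟨hx1, hx2⟩
          by_contra hcon
          rw [Set.mem_Ioi, not_lt] at hcon
          have := f0_mono' h00 h01 h10 h11 hdet hε0 hε (le_of_lt hx2) hcon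
          rw [huf'] at this
          exact absurd hx1 (not_lt.mpr this)
        · rintro x ⟨hx1, hx2⟩
          have hlt : f₁ π00 π01 π10 π11 ε x < f₀ π00 π01 π10 π11 ε x :=
            f1_lt_f0 h00 h01 h10 h11 hε0 hε (le_of_lt hx2)
          by_contra hcon
          rw [Set.mem_Ioi, not_lt] at hcon
          have := f0_mono' h00 h01 h10 h11 hdet hε0 hε (le_of_lt hx2) hcon
          rw [huf'] at this
          exact absurd (lt_trans hx1 hlt) (not_lt.mpr this)
      rcases le_or_gt L u with h | h
      · rw [base u h] at hQle
        exact le_antisymm hQle (zero_le)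
      · have hδu : δ ≤ u - f₀ π00 π01 π10 π11 ε u :=
          isMinOn_iff.mp hzmin u ⟨le_trans hs1 hsu.le, h.le⟩
        have hLu : L - u ≤ n * δ := by
          rw [huf'] at hδu
          push_cast at hs3
          linarith
        rw [ih u (le_trans hs1 hsu.le) h hLu] at hQle
        exact le_antisymm hQle (zero_le)
  obtain ⟨n, hn⟩ := exists_nat_ge ((L - t) / δ)
  have : L - t ≤ n * δ := by
    rw [div_le_iff₀ hδ] at hn
    linarith
  exact key n t le_rfl htL this

lemma Q_Ioo_zero (h00 : 0 < π00) (h01 : 0 < π01) (h10 : 0 < π10) (h11 : 0 < π11)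
    (hrow0 : π00 + π01 = 1) (hrow1 : π10 + π11 = 1)
    (hdet : 0 < π00 * π11 - π01 * π10) (hε0 : 0 < ε) (hε : ε < 1/2)
    (hp₁ : 0 < p₁) (hfix₁ : f₁ π00 π01 π10 π11 ε p₁ = p₁)
    (huniq₁ : ∀ q : ℝ, 0 < q → f₁ π00 π01 π10 π11 ε q = q → q = p₁)
    [IsProbabilityMeasure Q] (hQpos : Q (Set.Ioi 0) = 1)
    (hQinv : BlackwellInvariant π00 π01 π10 π11 ε Q) :
    ∀ t, t < p₁ → Q (Set.Ioo 0 t) = 0 := by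
  set m : ℝ := (ε/(1-ε)) * (π10/π11) with hmdef
  have hmpos : 0 < m := mul_pos (c1_pos hε0 hε) (div_pos h10 h11)
  have base : ∀ t, t ≤ m → Q (Set.Ioo 0 t) = 0 := by
    intro t ht
    have hle : Q (Set.Ioo 0 t) ≤ Q (∅ : Set ℝ) := by
      apply step_le h00 h01 h10 h11 hrow0 hrow1 hε0 hε hQpos hQinv measurableSet_Ioo
        (fun x hx => hx.1) MeasurableSet.empty (by simp)
      · rintro x ⟨hx1, hx2⟩
        have h1 : m < f₁ π00 π01 π10 π11 ε x := f1_lb h00 h01 h10 h11 hdet hε0 hε hx2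
        have h2 : f₁ π00 π01 π10 π11 ε x < f₀ π00 π01 π10 π11 ε x :=
          f1_lt_f0 h00 h01 h10 h11 hε0 hε (le_of_lt hx2)
        exact absurd hx1.2 (not_lt.mpr (by linarith))
      · rintro x ⟨hx1, hx2⟩
        have h1 : m < f₁ π00 π01 π10 π11 ε x := f1_lb h00 h01 h10 h11 hdet hε0 hε hx2
        exact absurd hx1.2 (not_lt.mpr (by linarith))
    simpa using hle
  intro t htp₁
  rcases le_or_gt t m with htm | htm
  · exact base t htm
  have hcont : ContinuousOn (fun u => f₁ π00 π01 π10 π11 ε u - u) (Set.Icc m t) :=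
    ((f1_contOn h01 h11).mono (fun x hx => le_trans hmpos.le hx.1)).sub continuousOn_id
  obtain ⟨z, hzmem, hzmin⟩ := isCompact_Icc.exists_isMinOn ⟨m, le_refl m, htm.le⟩ hcont
  set δ : ℝ := f₁ π00 π01 π10 π11 ε z - z with hδdef
  have hδ : 0 < δ := by
    have hz0 : 0 < z := lt_of_lt_of_le hmpos hzmem.1
    have hzp₁ : z < p₁ := lt_of_le_of_lt hzmem.2 htp₁
    exact sub_pos.mpr (f1_above h00 h01 h10 h11 hdet hε0 hε hp₁ huniq₁ hz0 hzp₁)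
  have key : ∀ n : ℕ, ∀ s, 0 < s → s ≤ t → s - m ≤ n * δ → Q (Set.Ioo 0 s) = 0 := by
    intro n
    induction n with
    | zero =>
      intro s hs0 hs1 hs2; push_cast at hs2
      exact base s (by linarith)
    | succ n ih =>
      intro s hs0 hs1 hs2
      rcases le_or_gt s m with hsm | hsm
      · exact base s hsm
      have hsp₁ : s < p₁ := lt_of_le_of_lt hs1 htp₁
      -- preimage point
      have hs_ub : s < (ε/(1-ε)) * (π00/π01) := by
        have h1 : f₁ π00 π01 π10 π11 ε p₁ < (ε/(1-ε)) * (π00/π01) :=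
          f1_ub h00 h01 h10 h11 hdet hε0 hε hp₁.le
        rw [hfix₁] at h1
        linarith
      obtain ⟨u, hu0, huf⟩ := moebius_surj h00 h01 h10 h11 (c1_pos hε0 hε) hsm hs_ub
      have huf' : f₁ π00 π01 π10 π11 ε u = s := huf
      have hup₁ : u < p₁ := by
        by_contra hcon
        push_neg at hcon
        have := f1_mono' h00 h01 h10 h11 hdet hε0 hε hp₁.le hcon
        rw [huf', hfix₁] at this
        linarith
      have hus : u < s := by
        have := f1_above h00 h01 h10 h11 hdet hε0 hε hp₁ huniq₁ hu0 hup₁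
        rw [huf'] at this; exact this
      have hQle : Q (Set.Ioo 0 s) ≤ Q (Set.Ioo 0 u) := by
        apply step_le h00 h01 h10 h11 hrow0 hrow1 hε0 hε hQpos hQinv measurableSet_Ioo
          (fun x hx => hx.1) measurableSet_Ioo (fun x hx => hx.1)
        · rintro x ⟨hx1, hx2⟩
          refine ⟨hx2, ?_⟩
          have hlt : f₁ π00 π01 π10 π11 ε x < f₀ π00 π01 π10 π11 ε x :=
            f1_lt_f0 h00 h01 h10 h11 hε0 hε (le_of_lt hx2)
          by_contra hcon
          push_neg at hcon
          have := f1_mono' h00 h01 h10 h11 hdet hε0 hε hu0.le hcon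
          rw [huf'] at this
          exact absurd hx1.2 (not_lt.mpr (by linarith))
        · rintro x ⟨hx1, hx2⟩
          refine ⟨hx2, ?_⟩
          by_contra hcon
          push_neg at hcon
          have := f1_mono' h00 h01 h10 h11 hdet hε0 hε hu0.le hcon
          rw [huf'] at this
          exact absurd hx1.2 (not_lt.mpr this)
      rcases le_or_gt u m with h | h
      · rw [base u h] at hQle
        exact le_antisymm hQle (zero_le)
      · have hδu : δ ≤ f₁ π00 π01 π10 π11 ε u - u :=
          isMinOn_iff.mp hzmin u ⟨h.le, le_trans hus.le hs1⟩
        have hum : u - m ≤ n * δ := by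
          rw [huf'] at hδu
          push_cast at hs2
          linarith
        rw [ih u hu0 (le_trans hus.le hs1) hum] at hQle
        exact le_antisymm hQle (zero_le)
  obtain ⟨n, hn⟩ := exists_nat_ge ((t - m) / δ)
  have : t - m ≤ n * δ := by
    rw [div_le_iff₀ hδ] at hn
    linarith
  exact key n t (lt_trans hmpos htm) le_rfl this

lemma Qfull (h00 : 0 < π00) (h01 : 0 < π01) (h10 : 0 < π10) (h11 : 0 < π11)
    (hrow0 : π00 + π01 = 1) (hrow1 : π10 + π11 = 1)
    (hdet : 0 < π00 * π11 - π01 * π10) (hε0 : 0 < ε) (hε : ε < 1/2)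
    (hp₀ : 0 < p₀) (hp₁ : 0 < p₁)
    (hfix₀ : f₀ π00 π01 π10 π11 ε p₀ = p₀) (hfix₁ : f₁ π00 π01 π10 π11 ε p₁ = p₁)
    (huniq₀ : ∀ q : ℝ, 0 < q → f₀ π00 π01 π10 π11 ε q = q → q = p₀)
    (huniq₁ : ∀ q : ℝ, 0 < q → f₁ π00 π01 π10 π11 ε q = q → q = p₁)
    [IsProbabilityMeasure Q] (hQpos : Q (Set.Ioi 0) = 1)
    (hQinv : BlackwellInvariant π00 π01 π10 π11 ε Q) :
    Q ((Set.Icc p₁ p₀)ᶜ) = 0 := by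
  have hIoi : Q (Set.Ioi p₀) = 0 := by
    have hsub : Set.Ioi p₀ ⊆ ⋃ n : ℕ, Set.Ioi (p₀ + 1/(n+1)) := by
      intro x hx
      obtain ⟨n, hn⟩ := exists_nat_one_div_lt (sub_pos.mpr hx : (0:ℝ) < x - p₀)
      exact Set.mem_iUnion.mpr ⟨n, by simp only [Set.mem_Ioi]; linarith⟩
    refine le_antisymm (le_trans (measure_mono hsub) ?_) (zero_le)
    refine le_trans (measure_iUnion_le _) (le_of_eq (ENNReal.tsum_eq_zero.mpr fun n => ?_))
    apply Q_Ioi_zero h00 h01 h10 h11 hrow0 hrow1 hdet hε0 hε hp₀ hfix₀ huniq₀ hQpos hQinv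
    have : (0:ℝ) < 1/((n:ℝ)+1) := by positivity
    linarith
  have hIoo : Q (Set.Ioo 0 p₁) = 0 := by
    have hsub : Set.Ioo 0 p₁ ⊆ ⋃ n : ℕ, Set.Ioo 0 (p₁ - 1/(n+1)) := by
      intro x hx
      obtain ⟨n, hn⟩ := exists_nat_one_div_lt (sub_pos.mpr hx.2)
      exact Set.mem_iUnion.mpr ⟨n, ⟨hx.1, by linarith⟩⟩
    refine le_antisymm (le_trans (measure_mono hsub) ?_) (zero_le)
    refine le_trans (measure_iUnion_le _) (le_of_eq (ENNReal.tsum_eq_zero.mpr fun n => ?_))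
    apply Q_Ioo_zero h00 h01 h10 h11 hrow0 hrow1 hdet hε0 hε hp₁ hfix₁ huniq₁ hQpos hQinv
    have : (0:ℝ) < 1/((n:ℝ)+1) := by positivity
    linarith
  have hIic : Q (Set.Iic 0) = 0 := QIic0 hQpos
  have hsub : (Set.Icc p₁ p₀)ᶜ ⊆ (Set.Iic 0 ∪ Set.Ioo 0 p₁) ∪ Set.Ioi p₀ := by
    intro x hx
    simp only [Set.mem_compl_iff, Set.mem_Icc, not_and_or, not_le] at hx
    rcases hx with h | h
    · rcases le_or_gt x 0 with h0 | h0
      · exact Or.inl (Or.inl h0)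
      · exact Or.inl (Or.inr ⟨h0, h⟩)
    · exact Or.inr h
  refine le_antisymm (le_trans (measure_mono hsub) ?_) (zero_le)
  refine le_trans (measure_union_le _ _) ?_
  rw [hIoi, add_zero]
  refine le_trans (measure_union_le _ _) ?_
  rw [hIic, hIoo, add_zero]
end Aux3

section Aux4
variable {π00 π01 π10 π11 ε p₀ p₁ : ℝ}

lemma gm_log_contraction (h00 : 0 < π00) (h01 : 0 < π01) (h10 : 0 < π10) (h11 : 0 < π11)
    (hdet : 0 < π00 * π11 - π01 * π10) (hp₁ : 0 < p₁) (hp : p₁ ≤ p₀) :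
    ∃ τ : ℝ, 0 ≤ τ ∧ τ < 1 ∧ ∀ a ∈ Set.Icc p₁ p₀, ∀ b ∈ Set.Icc p₁ p₀,
      |Real.log ((π00 * a + π10) / (π01 * a + π11))
        - Real.log ((π00 * b + π10) / (π01 * b + π11))| ≤ τ * |Real.log a - Real.log b| := by
  have hIpos : ∀ x ∈ Set.Icc p₁ p₀, (0:ℝ) < x := fun x hx => lt_of_lt_of_le hp₁ hx.1
  set φ : ℝ → ℝ := fun x => x * (π00 * π11 - π01 * π10) / ((π00 * x + π10) * (π01 * x + π11))
    with hφdef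
  have hφcont : ContinuousOn φ (Set.Icc p₁ p₀) := by
    apply ContinuousOn.div (by fun_prop) (by fun_prop)
    intro x hx
    exact (mul_pos (num_pos h00 h10 (hIpos x hx).le) (den_pos h01 h11 (hIpos x hx).le)).ne'
  obtain ⟨xm, hxm, hxmax⟩ := isCompact_Icc.exists_isMaxOn ⟨p₁, le_refl p₁, hp⟩ hφcont
  set τ : ℝ := φ xm with hτdef
  have hxm0 : 0 < xm := hIpos xm hxm
  have hτ0 : 0 ≤ τ := by
    apply div_nonneg (mul_nonneg hxm0.le hdet.le)
    exact (mul_pos (num_pos h00 h10 hxm0.le) (den_pos h01 h11 hxm0.le)).le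
  have hτ1 : τ < 1 := by
    rw [hτdef, hφdef]
    rw [div_lt_one (mul_pos (num_pos h00 h10 hxm0.le) (den_pos h01 h11 hxm0.le))]
    nlinarith [mul_pos (mul_pos h00 h01) (mul_pos hxm0 hxm0), mul_pos (mul_pos h01 h10) hxm0,
      mul_pos h10 h11]
  refine ⟨τ, hτ0, hτ1, ?_⟩
  -- ψ is monotone on the interval
  set g : ℝ → ℝ := fun x => (π00 * x + π10) / (π01 * x + π11) with hgdef
  set ψ : ℝ → ℝ := fun u => τ * Real.log u - Real.log (g u) with hψdef
  have hgpos' : ∀ x ∈ Set.Icc p₁ p₀, 0 < g x := fun x hx => gm_pos h00 h01 h10 h11 (hIpos x hx).le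
  have hψderiv : ∀ u, 0 < u → HasDerivAt ψ
      (τ * u⁻¹ - (π00 * (π01 * u + π11) - (π00 * u + π10) * π01) / (π01 * u + π11) ^ 2 / g u)
      u := by
    intro u hu
    have hnum : HasDerivAt (fun x : ℝ => π00 * x + π10) π00 u := by
      simpa using ((hasDerivAt_id u).const_mul π00).add_const π10
    have hden : HasDerivAt (fun x : ℝ => π01 * x + π11) π01 u := by
      simpa using ((hasDerivAt_id u).const_mul π01).add_const π11
    have hg : HasDerivAt g
        ((π00 * (π01 * u + π11) - (π00 * u + π10) * π01) / (π01 * u + π11) ^ 2) u :=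
      hnum.div hden (den_pos h01 h11 hu.le).ne'
    have hlogg := hg.log (gm_pos h00 h01 h10 h11 hu.le).ne'
    have hlogu := (Real.hasDerivAt_log hu.ne').const_mul τ
    exact hlogu.sub hlogg
  have hψmono : MonotoneOn ψ (Set.Icc p₁ p₀) := by
    apply monotoneOn_of_deriv_nonneg (convex_Icc p₁ p₀)
    · apply ContinuousOn.sub
      · exact continuousOn_const.mul (Real.continuousOn_log.mono
          (fun x hx => (hIpos x hx).ne'))
      · apply Real.continuousOn_log.comp
        · apply ContinuousOn.div (by fun_prop) (by fun_prop)
          exact fun x hx => (den_pos h01 h11 (hIpos x hx).le).ne'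
        · exact fun x hx => (hgpos' x hx).ne'
    · intro x hx
      rw [interior_Icc] at hx
      exact (hψderiv x (lt_trans hp₁ hx.1)).differentiableAt.differentiableWithinAt
    · intro x hx
      rw [interior_Icc] at hx
      have hx0 : 0 < x := lt_trans hp₁ hx.1
      rw [(hψderiv x hx0).deriv]
      have hxI : x ∈ Set.Icc p₁ p₀ := ⟨hx.1.le, hx.2.le⟩
      have hnp : 0 < π00 * x + π10 := num_pos h00 h10 hx0.le
      have hdp : 0 < π01 * x + π11 := den_pos h01 h11 hx0.le
      have hφx : φ x ≤ τ := isMaxOn_iff.mp hxmax x hxI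
      have hD : (π00 * (π01 * x + π11) - (π00 * x + π10) * π01) / (π01 * x + π11) ^ 2 / g x
          = (π00 * π11 - π01 * π10) / ((π00 * x + π10) * (π01 * x + π11)) := by
        rw [hgdef]
        field_simp
        ring
      rw [hD]
      rw [sub_nonneg, div_le_iff₀ (mul_pos hnp hdp)]
      rw [hφdef] at hφx
      rw [div_le_iff₀ (mul_pos hnp hdp)] at hφx
      have : τ * x⁻¹ * ((π00 * x + π10) * (π01 * x + π11))
          = τ * ((π00 * x + π10) * (π01 * x + π11)) * x⁻¹ := by ring
      calc π00 * π11 - π01 * π10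
          = (x * (π00 * π11 - π01 * π10)) * x⁻¹ := by field_simp
        _ ≤ (τ * ((π00 * x + π10) * (π01 * x + π11))) * x⁻¹ := by
            apply mul_le_mul_of_nonneg_right hφx (inv_nonneg.mpr hx0.le)
        _ = τ * x⁻¹ * ((π00 * x + π10) * (π01 * x + π11)) := by ring
  -- conclude
  have main : ∀ a ∈ Set.Icc p₁ p₀, ∀ b ∈ Set.Icc p₁ p₀, a ≤ b →
      |Real.log (g a) - Real.log (g b)| ≤ τ * |Real.log a - Real.log b| := by
    intro a ha b hb hab
    have hψab : ψ a ≤ ψ b := hψmono ha hb hab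
    have hlab : Real.log a ≤ Real.log b := Real.log_le_log (hIpos a ha) hab
    have hgab : g a ≤ g b := by
      rcases eq_or_lt_of_le hab with h | h
      · rw [h]
      · exact (gm_mono h00 h01 h10 h11 hdet (hIpos a ha).le h).le
    have hlgab : Real.log (g a) ≤ Real.log (g b) := Real.log_le_log (hgpos' a ha) hgab
    rw [abs_sub_comm (Real.log (g a)), abs_of_nonneg (sub_nonneg.mpr hlgab),
      abs_sub_comm (Real.log a), abs_of_nonneg (sub_nonneg.mpr hlab)]
    rw [hψdef] at hψab
    simp only at hψab
    nlinarith
  intro a ha b hb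
  rcases le_total a b with h | h
  · exact main a ha b hb h
  · rw [abs_sub_comm, abs_sub_comm (Real.log a)]
    exact main b hb a ha h

lemma f_log_contraction (h00 : 0 < π00) (h01 : 0 < π01) (h10 : 0 < π10) (h11 : 0 < π11)
    (hdet : 0 < π00 * π11 - π01 * π10) (hε0 : 0 < ε) (hε : ε < 1/2)
    (hp₁ : 0 < p₁) (hp : p₁ ≤ p₀) :
    ∃ τ : ℝ, 0 ≤ τ ∧ τ < 1 ∧ ∀ a ∈ Set.Icc p₁ p₀, ∀ b ∈ Set.Icc p₁ p₀,
      (|Real.log (f₀ π00 π01 π10 π11 ε a) - Real.log (f₀ π00 π01 π10 π11 ε b)|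
        ≤ τ * |Real.log a - Real.log b|) ∧
      (|Real.log (f₁ π00 π01 π10 π11 ε a) - Real.log (f₁ π00 π01 π10 π11 ε b)|
        ≤ τ * |Real.log a - Real.log b|) := by
  obtain ⟨τ, hτ0, hτ1, hτ⟩ := gm_log_contraction h00 h01 h10 h11 hdet hp₁ hp
  refine ⟨τ, hτ0, hτ1, fun a ha b hb => ?_⟩
  have ha0 : (0:ℝ) < a := lt_of_lt_of_le hp₁ ha.1
  have hb0 : (0:ℝ) < b := lt_of_lt_of_le hp₁ hb.1
  have hga := gm_pos h00 h01 h10 h11 (π00 := π00) (π01 := π01) (π10 := π10) (π11 := π11) ha0.le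
  have hgb := gm_pos h00 h01 h10 h11 (π00 := π00) (π01 := π01) (π10 := π10) (π11 := π11) hb0.le
  constructor
  · have e : Real.log (f₀ π00 π01 π10 π11 ε a) - Real.log (f₀ π00 π01 π10 π11 ε b)
        = Real.log ((π00 * a + π10) / (π01 * a + π11))
          - Real.log ((π00 * b + π10) / (π01 * b + π11)) := by
      unfold f₀
      rw [Real.log_mul (c0_pos hε0 hε).ne' hga.ne', Real.log_mul (c0_pos hε0 hε).ne' hgb.ne']
      ring
    rw [e]; exact hτ a ha b hb
  · have e : Real.log (f₁ π00 π01 π10 π11 ε a) - Real.log (f₁ π00 π01 π10 π11 ε b)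
        = Real.log ((π00 * a + π10) / (π01 * a + π11))
          - Real.log ((π00 * b + π10) / (π01 * b + π11)) := by
      unfold f₁
      rw [Real.log_mul (c1_pos hε0 hε).ne' hga.ne', Real.log_mul (c1_pos hε0 hε).ne' hgb.ne']
      ring
    rw [e]; exact hτ a ha b hb
end Aux4

section Aux5
variable {π00 π01 π10 π11 ε p₀ p₁ : ℝ} {Q : Measure ℝ}

lemma dist_le_log (hp₁ : 0 < p₁) {w x : ℝ} (hw : w ∈ Set.Icc p₁ p₀) (hx : x ∈ Set.Icc p₁ p₀) :
    |w - x| ≤ p₀ * |Real.log w - Real.log x| := by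
  have key : ∀ a b : ℝ, a ∈ Set.Icc p₁ p₀ → b ∈ Set.Icc p₁ p₀ → a ≤ b →
      b - a ≤ p₀ * (Real.log b - Real.log a) := by
    intro a b ha hb hab
    have ha0 : 0 < a := lt_of_lt_of_le hp₁ ha.1
    have hb0 : 0 < b := lt_of_lt_of_le hp₁ hb.1
    have h1 : Real.log (a / b) ≤ a / b - 1 := Real.log_le_sub_one_of_pos (div_pos ha0 hb0)
    rw [Real.log_div ha0.ne' hb0.ne'] at h1
    have h2 : (b - a) / b ≤ Real.log b - Real.log a := by
      have : a / b - 1 = -((b - a) / b) := by rw [div_sub_one hb0.ne', ← neg_div, neg_sub]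
      rw [this] at h1
      linarith
    have h3 : b - a ≤ (Real.log b - Real.log a) * b := (div_le_iff₀ hb0).mp h2
    have h4 : (Real.log b - Real.log a) * b ≤ (Real.log b - Real.log a) * p₀ := by
      apply mul_le_mul_of_nonneg_left hb.2
      have := Real.log_le_log ha0 hab
      linarith
    linarith
  rcases le_total w x with h | h
  · have hlog : Real.log w ≤ Real.log x := Real.log_le_log (lt_of_lt_of_le hp₁ hw.1) h
    rw [abs_sub_comm, abs_of_nonneg (sub_nonneg.mpr h), abs_sub_comm,
      abs_of_nonneg (sub_nonneg.mpr hlog)]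
    exact key w x hw hx h
  · have hlog : Real.log x ≤ Real.log w := Real.log_le_log (lt_of_lt_of_le hp₁ hx.1) h
    rw [abs_of_nonneg (sub_nonneg.mpr h), abs_of_nonneg (sub_nonneg.mpr hlog)]
    exact key x w hx hw h

lemma main_ind (h00 : 0 < π00) (h01 : 0 < π01) (h10 : 0 < π10) (h11 : 0 < π11)
    (hdet : 0 < π00 * π11 - π01 * π10) (hε0 : 0 < ε) (hε : ε < 1/2)
    (hp₁ : 0 < p₁) (hp : p₁ ≤ p₀)
    (hQinv : BlackwellInvariant π00 π01 π10 π11 ε Q) {τ : ℝ} (hτ0 : 0 ≤ τ)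
    (hcontr : ∀ a ∈ Set.Icc p₁ p₀, ∀ b ∈ Set.Icc p₁ p₀,
      (|Real.log (f₀ π00 π01 π10 π11 ε a) - Real.log (f₀ π00 π01 π10 π11 ε b)|
        ≤ τ * |Real.log a - Real.log b|) ∧
      (|Real.log (f₁ π00 π01 π10 π11 ε a) - Real.log (f₁ π00 π01 π10 π11 ε b)|
        ≤ τ * |Real.log a - Real.log b|))
    (hoverlap : (f₀ π00 π01 π10 π11 ε '' Set.Icc p₁ p₀ ∪ f₁ π00 π01 π10 π11 ε '' Set.Icc p₁ p₀)
        = Set.Icc p₁ p₀) :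
    ∀ n : ℕ, ∀ y ∈ Set.Icc p₁ p₀, ∃ u v : ℝ, p₁ ≤ u ∧ u ≤ v ∧ v ≤ p₀ ∧ y ∈ Set.Icc u v ∧
      (ENNReal.ofReal (ε * min (min π00 π01) (min π10 π11)))^n * Q (Set.Icc p₁ p₀)
        ≤ Q (Set.Icc u v) ∧
      ∀ w ∈ Set.Icc u v, |Real.log w - Real.log y| ≤ τ^n * (Real.log p₀ - Real.log p₁) := by
  intro n
  induction n with
  | zero =>
    intro y hy
    refine ⟨p₁, p₀, le_rfl, hp, le_rfl, hy, by simp, ?_⟩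
    intro w hw
    rw [pow_zero, one_mul, abs_sub_le_iff]
    constructor
    · have h1 := Real.log_le_log (lt_of_lt_of_le hp₁ hw.1) hw.2
      have h2 := Real.log_le_log hp₁ hy.1
      linarith
    · have h1 := Real.log_le_log (lt_of_lt_of_le hp₁ hy.1) hy.2
      have h2 := Real.log_le_log hp₁ hw.1
      linarith
  | succ n ih =>
    intro y hy
    have hy' : y ∈ (f₀ π00 π01 π10 π11 ε '' Set.Icc p₁ p₀
        ∪ f₁ π00 π01 π10 π11 ε '' Set.Icc p₁ p₀) := by rw [hoverlap]; exact hy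
    have himg0 : f₀ π00 π01 π10 π11 ε '' Set.Icc p₁ p₀ ⊆ Set.Icc p₁ p₀ := by
      conv_rhs => rw [← hoverlap]
      exact Set.subset_union_left
    have himg1 : f₁ π00 π01 π10 π11 ε '' Set.Icc p₁ p₀ ⊆ Set.Icc p₁ p₀ := by
      conv_rhs => rw [← hoverlap]
      exact Set.subset_union_right
    rcases hy' with ⟨z, hz, hfz⟩ | ⟨z, hz, hfz⟩
    · -- y = f₀ z
      obtain ⟨u, v, hu, huv, hv, hzuv, hQ, hdist⟩ := ih z hz
      have hu0 : (0:ℝ) < u := lt_of_lt_of_le hp₁ hu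
      have hIsub : Set.Icc u v ⊆ Set.Icc p₁ p₀ :=
        fun x hx => ⟨le_trans hu hx.1, le_trans hx.2 hv⟩
      set u' := f₀ π00 π01 π10 π11 ε u with hu'def
      set v' := f₀ π00 π01 π10 π11 ε v with hv'def
      have huv' : u' ≤ v' := f0_mono' h00 h01 h10 h11 hdet hε0 hε hu0.le huv
      have hIVT : Set.Icc u' v' ⊆ f₀ π00 π01 π10 π11 ε '' Set.Icc u v :=
        intermediate_value_Icc huv ((f0_contOn h01 h11).mono
          (fun x hx => le_trans hu0.le hx.1))
      have hsub' : Set.Icc u' v' ⊆ Set.Icc p₁ p₀ :=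
        hIVT.trans ((Set.image_mono hIsub).trans himg0)
      have hmem' := hsub' (Set.left_mem_Icc.mpr huv')
      have hmem'' := hsub' (Set.right_mem_Icc.mpr huv')
      refine ⟨u', v', hmem'.1, huv', hmem''.2, ?_, ?_, ?_⟩
      · rw [← hfz]
        exact ⟨f0_mono' h00 h01 h10 h11 hdet hε0 hε hu0.le hzuv.1,
          f0_mono' h00 h01 h10 h11 hdet hε0 hε (lt_of_lt_of_le hu0 hzuv.1).le hzuv.2⟩
      · have hQstep : ENNReal.ofReal (ε * min (min π00 π01) (min π10 π11)) * Q (Set.Icc u v)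
            ≤ Q (Set.Icc u' v') := by
          apply step_ge₀ hQinv measurableSet_Icc
            (fun x hx => lt_of_lt_of_le hp₁ (hsub' hx).1)
          · intro x hx
            exact ⟨f0_mono' h00 h01 h10 h11 hdet hε0 hε hu0.le hx.1,
              f0_mono' h00 h01 h10 h11 hdet hε0 hε (lt_of_lt_of_le hu0 hx.1).le hx.2⟩
          · intro x hx
            exact r0_ge h00 h01 h10 h11 hε0 hε (lt_of_lt_of_le hp₁ (hIsub hx).1).le
        calc (ENNReal.ofReal (ε * min (min π00 π01) (min π10 π11)))^(n+1)
              * Q (Set.Icc p₁ p₀)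
            = ENNReal.ofReal (ε * min (min π00 π01) (min π10 π11))
              * ((ENNReal.ofReal (ε * min (min π00 π01) (min π10 π11)))^n
                * Q (Set.Icc p₁ p₀)) := by ring
          _ ≤ ENNReal.ofReal (ε * min (min π00 π01) (min π10 π11)) * Q (Set.Icc u v) :=
              mul_le_mul_right hQ _
          _ ≤ Q (Set.Icc u' v') := hQstep
      · intro w hw
        obtain ⟨w', hw', hfw'⟩ := hIVT hw
        rw [← hfw', ← hfz]
        calc |Real.log (f₀ π00 π01 π10 π11 ε w') - Real.log (f₀ π00 π01 π10 π11 ε z)|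
            ≤ τ * |Real.log w' - Real.log z| := (hcontr w' (hIsub hw') z hz).1
          _ ≤ τ * (τ^n * (Real.log p₀ - Real.log p₁)) :=
              mul_le_mul_of_nonneg_left (hdist w' hw') hτ0
          _ = τ^(n+1) * (Real.log p₀ - Real.log p₁) := by ring
    · -- y = f₁ z
      obtain ⟨u, v, hu, huv, hv, hzuv, hQ, hdist⟩ := ih z hz
      have hu0 : (0:ℝ) < u := lt_of_lt_of_le hp₁ hu
      have hIsub : Set.Icc u v ⊆ Set.Icc p₁ p₀ :=
        fun x hx => ⟨le_trans hu hx.1, le_trans hx.2 hv⟩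
      set u' := f₁ π00 π01 π10 π11 ε u with hu'def
      set v' := f₁ π00 π01 π10 π11 ε v with hv'def
      have huv' : u' ≤ v' := f1_mono' h00 h01 h10 h11 hdet hε0 hε hu0.le huv
      have hIVT : Set.Icc u' v' ⊆ f₁ π00 π01 π10 π11 ε '' Set.Icc u v :=
        intermediate_value_Icc huv ((f1_contOn h01 h11).mono
          (fun x hx => le_trans hu0.le hx.1))
      have hsub' : Set.Icc u' v' ⊆ Set.Icc p₁ p₀ :=
        hIVT.trans ((Set.image_mono hIsub).trans himg1)
      have hmem' := hsub' (Set.left_mem_Icc.mpr huv')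
      have hmem'' := hsub' (Set.right_mem_Icc.mpr huv')
      refine ⟨u', v', hmem'.1, huv', hmem''.2, ?_, ?_, ?_⟩
      · rw [← hfz]
        exact ⟨f1_mono' h00 h01 h10 h11 hdet hε0 hε hu0.le hzuv.1,
          f1_mono' h00 h01 h10 h11 hdet hε0 hε (lt_of_lt_of_le hu0 hzuv.1).le hzuv.2⟩
      · have hQstep : ENNReal.ofReal (ε * min (min π00 π01) (min π10 π11)) * Q (Set.Icc u v)
            ≤ Q (Set.Icc u' v') := by
          apply step_ge₁ hQinv measurableSet_Icc
            (fun x hx => lt_of_lt_of_le hp₁ (hsub' hx).1)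
          · intro x hx
            exact ⟨f1_mono' h00 h01 h10 h11 hdet hε0 hε hu0.le hx.1,
              f1_mono' h00 h01 h10 h11 hdet hε0 hε (lt_of_lt_of_le hu0 hx.1).le hx.2⟩
          · intro x hx
            exact r1_ge h00 h01 h10 h11 hε0 hε (lt_of_lt_of_le hp₁ (hIsub hx).1).le
        calc (ENNReal.ofReal (ε * min (min π00 π01) (min π10 π11)))^(n+1)
              * Q (Set.Icc p₁ p₀)
            = ENNReal.ofReal (ε * min (min π00 π01) (min π10 π11))
              * ((ENNReal.ofReal (ε * min (min π00 π01) (min π10 π11)))^n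
                * Q (Set.Icc p₁ p₀)) := by ring
          _ ≤ ENNReal.ofReal (ε * min (min π00 π01) (min π10 π11)) * Q (Set.Icc u v) :=
              mul_le_mul_right hQ _
          _ ≤ Q (Set.Icc u' v') := hQstep
      · intro w hw
        obtain ⟨w', hw', hfw'⟩ := hIVT hw
        rw [← hfw', ← hfz]
        calc |Real.log (f₁ π00 π01 π10 π11 ε w') - Real.log (f₁ π00 π01 π10 π11 ε z)|
            ≤ τ * |Real.log w' - Real.log z| := (hcontr w' (hIsub hw') z hz).2
          _ ≤ τ * (τ^n * (Real.log p₀ - Real.log p₁)) :=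
              mul_le_mul_of_nonneg_left (hdist w' hw') hτ0
          _ = τ^(n+1) * (Real.log p₀ - Real.log p₁) := by ring
end Aux5


/-- Interval case of Theorem 3.3: if `f_0(I) ∪ f_1(I) = I`, then
`supp(Q) = I = [p_1, p_0]`. -/
theorem support_blackwell_interval (π00 π01 π10 π11 ε : ℝ)
    (h00 : 0 < π00) (h01 : 0 < π01) (h10 : 0 < π10) (h11 : 0 < π11)
    (hrow0 : π00 + π01 = 1) (hrow1 : π10 + π11 = 1)
    (hdet : 0 < π00 * π11 - π01 * π10)
    (hε0 : 0 < ε) (hε : ε < 1 / 2)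
    (p₀ p₁ : ℝ) (hp₀ : 0 < p₀) (hp₁ : 0 < p₁)
    (hfix₀ : f₀ π00 π01 π10 π11 ε p₀ = p₀) (hfix₁ : f₁ π00 π01 π10 π11 ε p₁ = p₁)
    (huniq₀ : ∀ q : ℝ, 0 < q → f₀ π00 π01 π10 π11 ε q = q → q = p₀)
    (huniq₁ : ∀ q : ℝ, 0 < q → f₁ π00 π01 π10 π11 ε q = q → q = p₁)
    (Q : MeasureTheory.Measure ℝ) [MeasureTheory.IsProbabilityMeasure Q]
    (hQpos : Q (Set.Ioi 0) = 1)
    (hQinv : BlackwellInvariant π00 π01 π10 π11 ε Q)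
    (hoverlap :
      (f₀ π00 π01 π10 π11 ε '' Set.Icc p₁ p₀ ∪ f₁ π00 π01 π10 π11 ε '' Set.Icc p₁ p₀)
        = Set.Icc p₁ p₀) :
    measSupp Q = Set.Icc p₁ p₀ := by
  
  have hp : p₁ < p₀ :=
    p1_lt_p0 h00 h01 h10 h11 hdet hε0 hε hp₀ hp₁ hfix₀ hfix₁ huniq₁
  have hQc : Q ((Set.Icc p₁ p₀)ᶜ) = 0 :=
    Qfull h00 h01 h10 h11 hrow0 hrow1 hdet hε0 hε hp₀ hp₁ hfix₀ hfix₁ huniq₀ huniq₁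
      hQpos hQinv
  have hQI : Q (Set.Icc p₁ p₀) = 1 := (prob_compl_eq_zero_iff measurableSet_Icc).mp hQc
  obtain ⟨τ, hτ0, hτ1, hcontr⟩ :=
    f_log_contraction h00 h01 h10 h11 hdet hε0 hε hp₁ hp.le
  ext x
  constructor
  · intro hx
    by_contra hxI
    have h := hx ((Set.Icc p₁ p₀)ᶜ) isClosed_Icc.isOpen_compl hxI
    rw [hQc] at h
    exact lt_irrefl 0 h
  · intro hx U hU hxU
    obtain ⟨δ, hδ0, hball⟩ := Metric.isOpen_iff.mp hU x hxU
    set D : ℝ := Real.log p₀ - Real.log p₁ with hD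
    have hD0 : 0 ≤ D := sub_nonneg.mpr (Real.log_le_log hp₁ hp.le)
    set K : ℝ := p₀ * (D + 1) with hK
    have hK0 : 0 < K := mul_pos hp₀ (by linarith)
    obtain ⟨n, hn⟩ := ((tendsto_pow_atTop_nhds_zero_of_lt_one hτ0 hτ1).eventually
      (gt_mem_nhds (show (0:ℝ) < δ / K by positivity))).exists
    obtain ⟨u, v, hu, huv, hv, hxuv, hQ, hdist⟩ :=
      main_ind h00 h01 h10 h11 hdet hε0 hε hp₁ hp.le hQinv hτ0 hcontr hoverlap n x hx
    have hJU : Set.Icc u v ⊆ U := by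
      intro w hw
      apply hball
      rw [Metric.mem_ball, Real.dist_eq]
      have hwI : w ∈ Set.Icc p₁ p₀ := ⟨le_trans hu hw.1, le_trans hw.2 hv⟩
      have h1 : |w - x| ≤ p₀ * |Real.log w - Real.log x| := dist_le_log hp₁ hwI hx
      have h2 : |Real.log w - Real.log x| ≤ τ^n * D := hdist w hw
      have h3 : τ^n * K < δ := by
        rw [lt_div_iff₀ hK0] at hn
        linarith
      have h4 : p₀ * (τ^n * D) ≤ τ^n * K := by
        have hτn : (0:ℝ) ≤ τ^n := pow_nonneg hτ0 n
        rw [hK]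
        nlinarith
      calc |w - x| ≤ p₀ * |Real.log w - Real.log x| := h1
        _ ≤ p₀ * (τ^n * D) := by nlinarith [abs_nonneg (Real.log w - Real.log x)]
        _ ≤ τ^n * K := h4
        _ < δ := h3
    have hpos : (0:ENNReal) < (ENNReal.ofReal (ε * min (min π00 π01) (min π10 π11)))^n :=
      ENNReal.pow_pos (ENNReal.ofReal_pos.mpr (cmin_pos h00 h01 h10 h11 hε0)) n
    calc (0:ENNReal) < (ENNReal.ofReal (ε * min (min π00 π01) (min π10 π11)))^n := hpos
      _ = (ENNReal.ofReal (ε * min (min π00 π01) (min π10 π11)))^n * Q (Set.Icc p₁ p₀) := by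
          rw [hQI, mul_one]
      _ ≤ Q (Set.Icc u v) := hQ
      _ ≤ Q U := measure_mono hJU
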